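/- Let m ≥ 1 be a natural number, ε > 0, s > 0, and let W_1, …, W_{2m} be independent Laplace random variables each with scale s = 2|I|/ε (for a finite index set I). Then for every δ ∈ (0,1), with probability at least 1 − δ, max_{1 ≤ k ≤ 2m} |W_k| ≤ (2|I|/ε)·ln(2m/δ). Consequently the privately perturbed update counts Δω'(D) = Δω(D) + W satisfy ‖Δω(D) − Δω'(D)‖_∞ ≤ (2|I|/ε)·ln(2m/δ) with probability at least 1 − δ, where m = Σ_{i∈I} 2^{|π_i|} is the number of (i,j) pairs. -/

import Mathlib

set_option maxHeartbeats 1000000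


open MeasureTheory Finset

/-- The Laplace distribution on `ℝ` with scale `b`: the measure with density
`x ↦ (1/(2b))·exp(−|x|/b)` with respect to Lebesgue measure. -/
noncomputable def laplaceMeasure (b : ℝ) : Measure ℝ :=
  MeasureTheory.volume.withDensity fun x => ENNReal.ofReal (1 / (2 * b) * Real.exp (-|x| / b))


set_option maxHeartbeats 1000000 in
lemma exp_int_aux (b t : ℝ) (hb : 0 < b) :
    ∫ x in (0:ℝ)..t, Real.exp (-x/b) = b - b * Real.exp (-t/b) := by
  have h : ∀ x : ℝ, Real.exp (-x/b) = Real.exp (x * (-b⁻¹)) := by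
    intro x; ring_nf
  simp only [h]
  rw [intervalIntegral.integral_comp_mul_right Real.exp
    (by simp [hb.ne'] : (-b⁻¹ : ℝ) ≠ 0), integral_exp]
  rw [smul_eq_mul]
  have : t * -b⁻¹ = -t/b := by field_simp
  rw [this]
  field_simp
  ring_nf; rw [Real.exp_zero]; ring

set_option maxHeartbeats 1000000 in
lemma real_int_aux (b t : ℝ) (hb : 0 < b) (ht : 0 ≤ t) :
    ∫ x in Set.Icc (-t) t, 1 / (2 * b) * Real.exp (-|x| / b) =
      1 - Real.exp (-t/b) := by
  rw [MeasureTheory.integral_Icc_eq_integral_Ioc,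
    ← intervalIntegral.integral_of_le (by linarith : -t ≤ t)]
  have hc : ∀ a c : ℝ, IntervalIntegrable (fun x => 1 / (2 * b) * Real.exp (-|x| / b))
      MeasureTheory.volume a c := fun a c => by
    apply Continuous.intervalIntegrable
    continuity
  rw [← intervalIntegral.integral_add_adjacent_intervals (hc (-t) 0) (hc 0 t)]
  have h1 : ∫ x in (0:ℝ)..t, 1 / (2 * b) * Real.exp (-|x| / b)
      = 1 / (2 * b) * (b - b * Real.exp (-t/b)) := by
    rw [intervalIntegral.integral_congr (g := fun x => 1 / (2 * b) * Real.exp (-x / b))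
      (by intro x hx
          rw [Set.uIcc_of_le ht] at hx
          simp [abs_of_nonneg hx.1])]
    rw [intervalIntegral.integral_const_mul, exp_int_aux b t hb]
  have h2 : ∫ x in (-t:ℝ)..0, 1 / (2 * b) * Real.exp (-|x| / b)
      = 1 / (2 * b) * (b - b * Real.exp (-t/b)) := by
    rw [intervalIntegral.integral_congr (g := fun x => 1 / (2 * b) * Real.exp (x / b))
      (by intro x hx
          rw [Set.uIcc_of_le (by linarith : -t ≤ 0)] at hx
          simp [abs_of_nonpos hx.2])]
    rw [intervalIntegral.integral_const_mul]
    have := intervalIntegral.integral_comp_neg (a := -t) (b := 0)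
      (fun x => Real.exp (-x / b))
    simp only [neg_neg, neg_zero] at this
    rw [this, exp_int_aux b t hb]
  rw [h1, h2]
  field_simp
  ring

set_option maxHeartbeats 1000000 in
lemma laplace_abs_le (b t : ℝ) (hb : 0 < b) (ht : 0 ≤ t) :
    laplaceMeasure b {x : ℝ | |x| ≤ t} = ENNReal.ofReal (1 - Real.exp (-t/b)) := by
  have hset : {x : ℝ | |x| ≤ t} = Set.Icc (-t) t := by
    ext x; simp [abs_le]
  rw [hset, laplaceMeasure, withDensity_apply _ measurableSet_Icc]
  rw [← MeasureTheory.ofReal_integral_eq_lintegral_ofReal]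
  · rw [real_int_aux b t hb ht]
  · apply ContinuousOn.integrableOn_compact isCompact_Icc
    apply Continuous.continuousOn; continuity
  · filter_upwards with x
    positivity

instance (b : ℝ) : MeasureTheory.SigmaFinite (laplaceMeasure b) := by
  unfold laplaceMeasure; infer_instance

variable {I : Type*}


/-- `Δα_{i,j}(D)`: the number of records `x` in `D` with `x_{π_i} = j` and `x_i = true`. -/
def deltaAlpha (π : I → Finset I) (i : I) (j : {l // l ∈ π i} → Bool)
    {N : ℕ} (D : Fin N → I → Bool) : ℕ :=
  (Finset.univ.filter fun r : Fin N =>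
    (∀ l : {l // l ∈ π i}, D r l = j l) ∧ D r i = true).card

/-- `Δβ_{i,j}(D)`: the number of records `x` in `D` with `x_{π_i} = j` and `x_i = false`. -/
def deltaBeta (π : I → Finset I) (i : I) (j : {l // l ∈ π i} → Bool)
    {N : ℕ} (D : Fin N → I → Bool) : ℕ :=
  (Finset.univ.filter fun r : Fin N =>
    (∀ l : {l // l ∈ π i}, D r l = j l) ∧ D r i = false).card

/-- The vector `Δω(D)` of all `2m` posterior update counts, indexed by `((i, j), b)`. -/
def updateVec (π : I → Finset I) {N : ℕ} (D : Fin N → I → Bool)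
    (p : ((i : I) × ({l // l ∈ π i} → Bool)) × Bool) : ℝ :=
  if p.2 then (deltaAlpha π p.1.1 p.1.2 D : ℝ) else (deltaBeta π p.1.1 p.1.2 D : ℝ)

/-- Let `W` be a vector of `2m` i.i.d. Laplace random variables with scale `2|I|/ε`,
where `m = Σ_{i∈I} 2^{|π_i|}` is the number of `(i,j)` pairs.  Then for every
`δ ∈ (0,1)`, with probability at least `1 − δ`, `max_k |W_k| ≤ (2|I|/ε)·ln(2m/δ)`;
consequently the perturbed update counts `Δω'(D) = Δω(D) + W` satisfy
`‖Δω(D) − Δω'(D)‖_∞ ≤ (2|I|/ε)·ln(2m/δ)` with probability at least `1 − δ`. -/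
theorem stmt_2 [Fintype I] [DecidableEq I] (π : I → Finset I) (ε : ℝ) (hε : 0 < ε)
    (δ : ℝ) (hδ : δ ∈ Set.Ioo (0 : ℝ) 1) (N : ℕ) (D : Fin N → I → Bool)
    (m : ℕ) (hm : m = ∑ i : I, 2 ^ (π i).card)
    (P : Measure (((i : I) × ({l // l ∈ π i} → Bool)) × Bool → ℝ))
    (hP : P = Measure.pi fun _ => laplaceMeasure (2 * Fintype.card I / ε)) :
    ENNReal.ofReal (1 - δ) ≤
      P {w | ∀ k, |w k| ≤ 2 * Fintype.card I / ε * Real.log (2 * m / δ)} ∧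
    ENNReal.ofReal (1 - δ) ≤
      P {w | ∀ k, |updateVec π D k - (updateVec π D k + w k)| ≤
          2 * Fintype.card I / ε * Real.log (2 * m / δ)} := by
  obtain ⟨hδ0, hδ1⟩ := hδ
  set b : ℝ := 2 * Fintype.card I / ε with hb
  set t : ℝ := b * Real.log (2 * m / δ) with htdef
  have hsets : {w : ((i : I) × ({l // l ∈ π i} → Bool)) × Bool → ℝ |
      ∀ k, |updateVec π D k - (updateVec π D k + w k)| ≤ t} = {w | ∀ k, |w k| ≤ t} := by
    ext w
    simp only [Set.mem_setOf_eq, sub_add_cancel_left, abs_neg]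
  rw [hsets]
  refine ⟨?_, ?_⟩ <;> (
  · rw [hP]
    have hpi : {w : ((i : I) × ({l // l ∈ π i} → Bool)) × Bool → ℝ | ∀ k, |w k| ≤ t}
        = Set.pi Set.univ (fun _ => {x : ℝ | |x| ≤ t}) := by
      ext w; simp [Set.mem_pi]
    rw [hpi, Measure.pi_pi]
    rcases isEmpty_or_nonempty I with hI | hI
    · haveI h1 : IsEmpty ((i : I) × ({l // l ∈ π i} → Bool)) := ⟨fun x => hI.elim x.1⟩
      haveI : IsEmpty (((i : I) × ({l // l ∈ π i} → Bool)) × Bool) := ⟨fun x => h1.elim x.1⟩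
      rw [Finset.univ_eq_empty, Finset.prod_empty]
      exact ENNReal.ofReal_le_one.mpr (by linarith)
    · have hbpos : 0 < b := by
        have : 0 < Fintype.card I := Fintype.card_pos
        rw [hb]; positivity
      have hm1 : 1 ≤ m := by
        rw [hm]
        calc 1 ≤ Fintype.card I := Fintype.card_pos
        _ = ∑ _i : I, 1 := by simp
        _ ≤ ∑ i : I, 2 ^ (π i).card := Finset.sum_le_sum fun i _ =>
            Nat.one_le_two_pow
      have hr : (1:ℝ) ≤ 2 * m / δ := by
        rw [le_div_iff₀ hδ0]
        have : (1:ℝ) ≤ (m:ℝ) := by exact_mod_cast hm1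
        nlinarith
      have ht0 : 0 ≤ t := mul_nonneg hbpos.le (Real.log_nonneg hr)
      have hexp : Real.exp (-t/b) = δ / (2 * m) := by
        have : -t/b = -Real.log (2 * m / δ) := by
          rw [htdef, neg_div, mul_div_cancel_left₀ _ hbpos.ne']
        rw [this, Real.exp_neg, Real.exp_log (by linarith : (0:ℝ) < 2 * m / δ)]
        rw [inv_div]
      have hcard : Fintype.card (((i : I) × ({l // l ∈ π i} → Bool)) × Bool) = 2 * m := by
        rw [Fintype.card_prod, Fintype.card_bool, Fintype.card_sigma]
        simp only [Fintype.card_fun, Fintype.card_bool, Fintype.card_coe]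
        rw [hm]; ring
      rw [Finset.prod_const, Finset.card_univ, hcard, laplace_abs_le b t hbpos ht0, hexp]
      have hnn : (0:ℝ) ≤ 1 - δ / (2 * m) := by
        have h2m : (2:ℝ) ≤ 2 * m := by
          have : (1:ℝ) ≤ (m:ℝ) := by exact_mod_cast hm1
          linarith
        have : δ / (2 * m) ≤ δ / 2 := by
          apply div_le_div_of_nonneg_left hδ0.le (by norm_num) h2m
        linarith
      rw [← ENNReal.ofReal_pow hnn]
      apply ENNReal.ofReal_le_ofReal
      have hber := one_add_mul_le_pow (a := -(δ / (2 * m)))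
        (by nlinarith [hnn] : (-2:ℝ) ≤ -(δ / (2 * m)))  (2 * m)
      have h2m0 : ((2 * m : ℕ) : ℝ) = 2 * (m:ℝ) := by push_cast; ring
      have hmpos : (0:ℝ) < 2 * m := by
        have : (1:ℝ) ≤ (m:ℝ) := by exact_mod_cast hm1
        linarith
      calc 1 - δ = 1 + (2*m:ℕ) * (-(δ / (2 * m))) := by
            rw [h2m0]; field_simp; ring
        _ ≤ (1 + -(δ / (2 * m))) ^ (2*m) := hber
        _ = (1 - δ / (2 * m)) ^ (2*m) := by ring_nf)
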